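/- Let T = (U, E) be a finite tree with leaf set V ⊆ U, let ρ_e ∈ [0,1] be a weight assigned to each edge e ∈ E, and define ρ_{ij} = ∏_{e ∈ ph(i,j)} ρ_e for i, j ∈ V (an empty product being 1). Then for any four distinct leaves i, j, k, l ∈ V such that the edge sets ph(i,j) and ph(k,l) are disjoint, it holds that ρ_{ik} ρ_{jl} = ρ_{il} ρ_{jk} ≤ ρ_{ij} ρ_{kl}. -/

import Mathlib

open SimpleGraph

/-- In an acyclic graph, an edge lies on a path iff deleting it disconnects the endpoints. -/
private lemma aux_edge_on_path {U : Type*} {G : SimpleGraph U} (hG : G.IsAcyclic)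
    {e : Sym2 U} : ∀ {u v : U} (p : G.Walk u v), p.IsPath → e ∈ p.edges →
    ¬(G.deleteEdges {e}).Reachable u v := by
  intro u v p
  induction p with
  | nil => intro _ he; simp at he
  | @cons u c v h q ih =>
    intro hp he
    rw [SimpleGraph.Walk.cons_isPath_iff] at hp
    obtain ⟨hq, hus⟩ := hp
    rw [SimpleGraph.Walk.edges_cons, List.mem_cons] at he
    rcases he with rfl | he
    · -- e = s(u,c)
      have heq : s(u, c) ∉ q.edges := fun hh =>
        hus (q.fst_mem_support_of_mem_edges hh)
      have hreach : (G.deleteEdges {s(u, c)}).Reachable c v :=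
        ⟨q.toDeleteEdges {s(u, c)} (fun e' he' hm => heq (Set.mem_singleton_iff.mp hm ▸ he'))⟩
      intro hr
      have hbridge : G.IsBridge s(u, c) :=
        (SimpleGraph.isAcyclic_iff_forall_edge_isBridge.mp hG) (by
          rw [SimpleGraph.mem_edgeSet]; exact h)
      rw [SimpleGraph.isBridge_iff] at hbridge
      exact hbridge (hr.trans hreach.symm)
    · -- e ∈ q.edges
      have hne : s(u, c) ≠ e := by
        rintro rfl
        exact hus (q.fst_mem_support_of_mem_edges he)
      have hadj : (G.deleteEdges {e}).Adj u c := by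
        rw [SimpleGraph.deleteEdges_adj]
        exact ⟨h, by simpa using hne⟩
      intro hr
      exact ih hq he (hadj.symm.reachable.trans hr)

/-- In a tree, after deleting an edge `s(a,b)`, every vertex is reachable from `a` or `b`. -/
private lemma aux_side {U : Type*} [DecidableEq U] {G : SimpleGraph U} (hG : G.IsTree) (a b x : U) :
    (G.deleteEdges {s(a, b)}).Reachable a x ∨ (G.deleteEdges {s(a, b)}).Reachable b x := by
  obtain ⟨w⟩ := hG.isConnected a x
  set p := w.bypass with hpdef
  have hp : p.IsPath := w.bypass_isPath
  by_cases he : s(a, b) ∈ p.edges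
  · right
    cases hq : p with
    | nil => rw [hq] at he; simp at he
    | @cons _ c _ h q =>
      rw [hq] at he hp
      rw [SimpleGraph.Walk.edges_cons, List.mem_cons] at he
      rw [SimpleGraph.Walk.cons_isPath_iff] at hp
      rcases he with heq | he
      · have hbc : b = c := Sym2.congr_right.mp heq
        subst hbc
        have heq' : s(a, b) ∉ q.edges := fun hh =>
          hp.2 (q.fst_mem_support_of_mem_edges hh)
        exact ⟨q.toDeleteEdges {s(a, b)} (fun e' he' hm => heq' (Set.mem_singleton_iff.mp hm ▸ he'))⟩
      · exact absurd (q.fst_mem_support_of_mem_edges he) hp.2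
  · left
    exact ⟨p.toDeleteEdges {s(a, b)} (fun e' he' hm => he (Set.mem_singleton_iff.mp hm ▸ he'))⟩

private lemma aux_count1 (a b c p q : Prop) [Decidable a] [Decidable b] [Decidable c]
    [Decidable p] [Decidable q]
    (hp : p ↔ ¬(a ↔ c)) (hq : q ↔ ¬(a ↔ b)) (hcon : a → (b ↔ c)) :
    ((if b then 1 else 0) + (if p then 1 else 0) : ℕ) =
      (if c then 1 else 0) + (if q then 1 else 0) := by
  by_cases ha : a <;> by_cases hb : b <;> by_cases hc : c <;> simp_all

private lemma aux_count2 (a b c p s d : Prop) [Decidable a] [Decidable b] [Decidable c]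
    [Decidable p] [Decidable s] [Decidable d]
    (hp : p ↔ ¬(a ↔ c)) (hs : s ↔ ¬(b ↔ c)) (hd : d ↔ ((b ∧ c) ∧ ¬a)) (hcon : a → (b ↔ c)) :
    ((if b then 1 else 0) + (if p then 1 else 0) : ℕ) =
      ((if a then 1 else 0) + (if s then 1 else 0) + (if d then 1 else 0)) +
        (if d then 1 else 0) := by
  by_cases ha : a <;> by_cases hb : b <;> by_cases hc : c <;> simp_all

/-- For a finite tree `G` with leaf set `V` and edge weights `ρ e ∈ [0,1]`, the induced
leaf correlations `r u v = ∏_{e ∈ ph u v} ρ e` satisfy, for any four distinct leaves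
`i j k l` whose connecting paths `ph i j` and `ph k l` are edge-disjoint,
`r i k * r j l = r i l * r j k ≤ r i j * r k l`. -/
theorem orange_disjoint_quartet
    {U : Type*} [Fintype U] [DecidableEq U]
    (G : SimpleGraph U) [DecidableRel G.Adj] (hG : G.IsTree)
    (V : Finset U) (hV : ∀ v ∈ V, G.degree v = 1)
    (ρ : Sym2 U → ℝ) (hρ : ∀ e ∈ G.edgeSet, ρ e ∈ Set.Icc (0 : ℝ) 1)
    (ph : U → U → Finset (Sym2 U))
    (hph : ∀ u v : U, ∃ p : G.Walk u v, p.IsPath ∧ p.edges.toFinset = ph u v)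
    (r : U → U → ℝ) (hr : ∀ u v : U, r u v = ∏ e ∈ ph u v, ρ e)
    (i j k l : U) (hi : i ∈ V) (hj : j ∈ V) (hk : k ∈ V) (hl : l ∈ V)
    (hij : i ≠ j) (hik : i ≠ k) (hil : i ≠ l) (hjk : j ≠ k) (hjl : j ≠ l) (hkl : k ≠ l)
    (hdisj : Disjoint (ph i j) (ph k l)) :
    r i k * r j l = r i l * r j k ∧ r i k * r j l ≤ r i j * r k l := by
  classical
  -- membership characterization
  have hmem : ∀ u v (e : Sym2 U), e ∈ ph u v ↔ ¬(G.deleteEdges {e}).Reachable u v := by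
    intro u v e
    obtain ⟨p, hp, hpe⟩ := hph u v
    rw [← hpe, List.mem_toFinset]
    constructor
    · exact aux_edge_on_path hG.IsAcyclic p hp
    · intro h
      by_contra hne
      exact h ⟨p.toDeleteEdges {e} (fun e' he' hm => hne (Set.mem_singleton_iff.mp hm ▸ he'))⟩
  have hsub : ∀ u v (e : Sym2 U), e ∈ ph u v → e ∈ G.edgeSet := by
    intro u v e he
    obtain ⟨p, hp, hpe⟩ := hph u v
    rw [← hpe, List.mem_toFinset] at he
    exact p.edges_subset_edgeSet he
  have hsymm : ∀ u v (e : Sym2 U), e ∈ ph u v ↔ e ∈ ph v u := by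
    intro u v e
    rw [hmem, hmem, SimpleGraph.reachable_comm]
  -- key XOR identity
  have hkey : ∀ (e : Sym2 U), e ∈ G.edgeSet →
      ∀ u v w : U, (e ∈ ph u v ↔ ¬(e ∈ ph u w ↔ e ∈ ph w v)) := by
    intro e
    induction e using Sym2.ind with
    | _ a b =>
      intro he u v w
      have hnab : ¬(G.deleteEdges {s(a, b)}).Reachable a b := by
        have hbridge : G.IsBridge s(a, b) :=
          (SimpleGraph.isAcyclic_iff_forall_edge_isBridge.mp hG.IsAcyclic) he
        rw [SimpleGraph.isBridge_iff] at hbridge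
        exact hbridge
      have hiff : ∀ x y : U, (G.deleteEdges {s(a, b)}).Reachable x y ↔
          ((G.deleteEdges {s(a, b)}).Reachable a x ↔ (G.deleteEdges {s(a, b)}).Reachable a y) := by
        intro x y
        constructor
        · intro hxy
          exact ⟨fun h => h.trans hxy, fun h => h.trans hxy.symm⟩
        · intro h
          rcases aux_side hG a b x with hx | hx
          · exact hx.symm.trans (h.mp hx)
          · rcases aux_side hG a b y with hy | hy
            · exact absurd ((h.mpr hy).trans hx.symm) hnab
            · exact hx.symm.trans hy
      rw [hmem, hmem, hmem, hiff u v, hiff u w, hiff w v]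
      tauto
  -- counting helper
  have hcount : ∀ (A : Finset (Sym2 U)) (e : Sym2 U),
      Multiset.count e A.val = if e ∈ A then 1 else 0 := by
    intro A e
    rw [Multiset.count_eq_of_nodup A.nodup]
    simp [Finset.mem_val]
  -- constraint from disjointness
  have hcon : ∀ e : Sym2 U, e ∈ ph i j → (e ∈ ph i k ↔ e ∈ ph i l) := by
    intro e he
    have henk : e ∉ ph k l := fun h => (Finset.disjoint_left.mp hdisj) he h
    have hee := hsub i j e he
    have h1 := hkey e hee k l i
    rw [hsymm k i] at h1
    tauto
  -- membership identities for the three "far" paths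
  have hjl' : ∀ e : Sym2 U, e ∈ G.edgeSet →
      (e ∈ ph j l ↔ ¬(e ∈ ph i j ↔ e ∈ ph i l)) := by
    intro e he
    have h1 := hkey e he j l i
    rw [hsymm j i] at h1
    exact h1
  have hjk' : ∀ e : Sym2 U, e ∈ G.edgeSet →
      (e ∈ ph j k ↔ ¬(e ∈ ph i j ↔ e ∈ ph i k)) := by
    intro e he
    have h1 := hkey e he j k i
    rw [hsymm j i] at h1
    exact h1
  have hkl' : ∀ e : Sym2 U, e ∈ G.edgeSet →
      (e ∈ ph k l ↔ ¬(e ∈ ph i k ↔ e ∈ ph i l)) := by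
    intro e he
    have h1 := hkey e he k l i
    rw [hsymm k i] at h1
    exact h1
  set D : Finset (Sym2 U) := (ph i k ∩ ph i l) \ ph i j with hD
  -- the two multiset identities
  have hms1 : (ph i k).val + (ph j l).val = (ph i l).val + (ph j k).val := by
    ext e
    simp only [Multiset.count_add, hcount]
    by_cases he : e ∈ G.edgeSet
    · exact aux_count1 (e ∈ ph i j) (e ∈ ph i k) (e ∈ ph i l) _ _
        (hjl' e he) (hjk' e he) (hcon e)
    · have n1 : e ∉ ph i k := fun h => he (hsub _ _ _ h)
      have n2 : e ∉ ph j l := fun h => he (hsub _ _ _ h)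
      have n3 : e ∉ ph i l := fun h => he (hsub _ _ _ h)
      have n4 : e ∉ ph j k := fun h => he (hsub _ _ _ h)
      simp [n1, n2, n3, n4]
  have hms2 : (ph i k).val + (ph j l).val =
      ((ph i j).val + (ph k l).val + D.val) + D.val := by
    ext e
    simp only [Multiset.count_add, hcount]
    by_cases he : e ∈ G.edgeSet
    · exact aux_count2 (e ∈ ph i j) (e ∈ ph i k) (e ∈ ph i l) _ _ _
        (hjl' e he) (hkl' e he)
        (by rw [hD]; simp [Finset.mem_sdiff, Finset.mem_inter]) (hcon e)
    · have n1 : e ∉ ph i k := fun h => he (hsub _ _ _ h)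
      have n2 : e ∉ ph j l := fun h => he (hsub _ _ _ h)
      have n3 : e ∉ ph i j := fun h => he (hsub _ _ _ h)
      have n4 : e ∉ ph k l := fun h => he (hsub _ _ _ h)
      have n5 : e ∉ D := by rw [hD]; simp [Finset.mem_sdiff, Finset.mem_inter, n1]
      simp [n1, n2, n3, n4, n5]
  -- translate to products
  have hPexp : ∀ A B : Finset (Sym2 U),
      (∏ e ∈ A, ρ e) * (∏ e ∈ B, ρ e) = ((A.val + B.val).map ρ).prod := by
    intro A B
    rw [Finset.prod_eq_multiset_prod, Finset.prod_eq_multiset_prod, Multiset.map_add,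
      Multiset.prod_add]
  have eq1 : r i k * r j l = r i l * r j k := by
    rw [hr i k, hr j l, hr i l, hr j k, hPexp, hPexp, hms1]
  have expand : r i k * r j l = (r i j * r k l) * ((∏ e ∈ D, ρ e) * (∏ e ∈ D, ρ e)) := by
    rw [hr i k, hr j l, hPexp, hms2]
    simp only [Multiset.map_add, Multiset.prod_add, ← Finset.prod_eq_multiset_prod, hr]
    ring
  have hDsub : ∀ e ∈ D, e ∈ G.edgeSet := by
    intro e he
    rw [hD, Finset.mem_sdiff, Finset.mem_inter] at he
    exact hsub i k e he.1.1
  have hD0 : 0 ≤ ∏ e ∈ D, ρ e := Finset.prod_nonneg fun e he => (hρ e (hDsub e he)).1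
  have hD1 : (∏ e ∈ D, ρ e) ≤ 1 :=
    Finset.prod_le_one (fun e he => (hρ e (hDsub e he)).1) (fun e he => (hρ e (hDsub e he)).2)
  have hij0 : 0 ≤ r i j := by
    rw [hr]
    exact Finset.prod_nonneg fun e he => (hρ e (hsub i j e he)).1
  have hkl0 : 0 ≤ r k l := by
    rw [hr]
    exact Finset.prod_nonneg fun e he => (hρ e (hsub k l e he)).1
  refine ⟨eq1, ?_⟩
  rw [expand]
  have hss : (∏ e ∈ D, ρ e) * (∏ e ∈ D, ρ e) ≤ 1 := by nlinarith
  exact mul_le_of_le_one_right (mul_nonneg hij0 hkl0) hss
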